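/- Let G be a finite group, π a set of primes, and suppose G is π-separable. If every π-element of G has conjugacy class size a π'-number (i.e., the class size is not divisible by any prime in π), then G has abelian Hall π-subgroups. -/

import Mathlib

/-- A finite group is `π`-separable if it has a subnormal series each of whose factors is
either a `π`-group or a `π'`-group. -/
def IsPiSeparable (G : Type*) [Group G] (π : Set ℕ) : Prop :=
  ∃ (n : ℕ) (s : Fin (n + 1) → Subgroup G),
    s 0 = ⊥ ∧ s (Fin.last n) = ⊤ ∧
    ∀ i : Fin n,
      s i.castSucc ≤ s i.succ ∧
      ((s i.castSucc).subgroupOf (s i.succ)).Normal ∧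
      ((∀ ℓ : ℕ, ℓ.Prime →
          ℓ ∣ Nat.card ((s i.succ) ⧸ (s i.castSucc).subgroupOf (s i.succ)) → ℓ ∈ π) ∨
       (∀ ℓ : ℕ, ℓ.Prime →
          ℓ ∣ Nat.card ((s i.succ) ⧸ (s i.castSucc).subgroupOf (s i.succ)) → ℓ ∉ π))


open Subgroup

universe u

namespace PiSepAux

section One
variable {G : Type*} [Group G] {π : Set ℕ}

/-- `n` is a `π`-number. -/
def PiNum (π : Set ℕ) (n : ℕ) : Prop := ∀ ℓ : ℕ, ℓ.Prime → ℓ ∣ n → ℓ ∈ π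

lemma PiNum.of_dvd {π : Set ℕ} {m n : ℕ} (h : m ∣ n) (hn : PiNum π n) : PiNum π m :=
  fun ℓ hℓ hd => hn ℓ hℓ (hd.trans h)

lemma PiNum.one' (π : Set ℕ) : PiNum π 1 := fun ℓ hℓ hd => absurd (Nat.eq_one_of_dvd_one hd) hℓ.ne_one

lemma PiNum.mul {π : Set ℕ} {m n : ℕ} (hm : PiNum π m) (hn : PiNum π n) : PiNum π (m * n) :=
  fun ℓ hℓ hd => ((hℓ.dvd_mul).mp hd).elim (hm ℓ hℓ) (hn ℓ hℓ)

lemma coprime_of_pinum {π : Set ℕ} {m n : ℕ} (hm : PiNum π m) (hn : PiNum πᶜ n) :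
    Nat.Coprime m n := by
  rw [Nat.coprime_iff_gcd_eq_one]
  by_contra h
  obtain ⟨p, hp, hpd⟩ := Nat.exists_prime_and_dvd h
  exact (hn p hp (hpd.trans (Nat.gcd_dvd_right m n))) (hm p hp (hpd.trans (Nat.gcd_dvd_left m n)))

lemma PiNum.eq_one {π : Set ℕ} {n : ℕ} (h1 : PiNum π n) (h2 : PiNum πᶜ n) (hn : n ≠ 0) :
    n = 1 := by
  by_contra h
  obtain ⟨p, hp, hpd⟩ := Nat.exists_prime_and_dvd h
  exact h2 p hp hpd (h1 p hp hpd)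

/-- decomposition into π-part and π'-part -/
lemma exists_pinum_decomp (π : Set ℕ) {m : ℕ} (hm : m ≠ 0) :
    ∃ u v : ℕ, m = u * v ∧ PiNum π u ∧ PiNum πᶜ v := by
  classical
  refine ⟨m.factorization.prod fun p e => if p ∈ π then p ^ e else 1,
    m.factorization.prod fun p e => if p ∈ π then 1 else p ^ e, ?_, ?_, ?_⟩
  · conv_lhs => rw [← Nat.factorization_prod_pow_eq_self hm]
    rw [Finsupp.prod, Finsupp.prod, Finsupp.prod, ← Finset.prod_mul_distrib]
    refine Finset.prod_congr rfl fun p hp => ?_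
    by_cases h : p ∈ π <;> simp [h]
  · intro ℓ hℓ hd
    rw [Finsupp.prod] at hd
    obtain ⟨p, hp, hdp⟩ := hℓ.prime.exists_mem_finset_dvd hd
    by_cases h : p ∈ π
    · rw [if_pos h] at hdp
      rwa [Nat.prime_dvd_prime_iff_eq hℓ (Nat.prime_of_mem_primeFactors (by rwa [Nat.support_factorization] at hp))
        |>.mp (hℓ.dvd_of_dvd_pow hdp)]
    · rw [if_neg h] at hdp
      exact absurd (Nat.eq_one_of_dvd_one hdp) hℓ.ne_one
  · intro ℓ hℓ hd
    rw [Finsupp.prod] at hd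
    obtain ⟨p, hp, hdp⟩ := hℓ.prime.exists_mem_finset_dvd hd
    by_cases h : p ∈ π
    · rw [if_pos h] at hdp
      exact absurd (Nat.eq_one_of_dvd_one hdp) hℓ.ne_one
    · rw [if_neg h] at hdp
      simp only [Set.mem_compl_iff]
      rwa [Nat.prime_dvd_prime_iff_eq hℓ (Nat.prime_of_mem_primeFactors (by rwa [Nat.support_factorization] at hp))
        |>.mp (hℓ.dvd_of_dvd_pow hdp)]


/-- lifting π-elements through surjections -/
lemma exists_pi_lift [Finite G] {Q : Type*} [Group Q] (f : G →* Q) (hf : Function.Surjective f)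
    (q : Q) (hq : PiNum π (orderOf q)) : ∃ x : G, PiNum π (orderOf x) ∧ f x = q := by
  obtain ⟨g, rfl⟩ := hf q
  have hm : orderOf g ≠ 0 := (orderOf_pos g).ne'
  obtain ⟨u, v, hmuv, hu, hv⟩ := exists_pinum_decomp π hm
  have hu0 : u ≠ 0 := fun h => hm (by simp [hmuv, h])
  have hv0 : v ≠ 0 := fun h => hm (by simp [hmuv, h])
  have hk : orderOf (f g) ∣ u := by
    have h1 : orderOf (f g) ∣ u * v := hmuv ▸ orderOf_map_dvd f g
    exact (Nat.Coprime.dvd_of_dvd_mul_right (coprime_of_pinum hq hv) h1)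
  set t := v ^ u.totient with ht
  have htv : v ∣ t := dvd_pow_self v (Nat.totient_pos.mpr (Nat.pos_of_ne_zero hu0)).ne'
  have ht1 : t ≡ 1 [MOD u] := Nat.ModEq.pow_totient ((coprime_of_pinum hu hv).symm)
  refine ⟨g ^ t, ?_, ?_⟩
  · -- orderOf (g ^ t) divides u
    set d := Nat.gcd (orderOf g) t with hd
    have hvg : v ∣ d := Nat.dvd_gcd (hmuv ▸ Dvd.intro_left u rfl) htv
    have hgd : d ∣ orderOf g := Nat.gcd_dvd_left _ _
    obtain ⟨z, hz⟩ := hgd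
    have hd0 : d ≠ 0 := by rintro h; rw [h, zero_mul] at hz; exact hm hz
    have hoz : orderOf (g ^ t) = z := by
      rw [orderOf_pow g, ← hd, hz, Nat.mul_div_cancel_left _ (Nat.pos_of_ne_zero hd0)]
    have hdvd : orderOf (g ^ t) ∣ u := by
      rw [hoz]
      obtain ⟨w, hw⟩ := hvg
      have heq : u * v = (v * w) * z := by rw [← hw, ← hz, hmuv]
      have : u = w * z := by
        apply Nat.eq_of_mul_eq_mul_left (Nat.pos_of_ne_zero hv0)
        calc v * u = u * v := mul_comm _ _
        _ = (v * w) * z := heq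
        _ = v * (w * z) := by ring
      exact this ▸ Dvd.intro_left w rfl
    exact PiNum.of_dvd hdvd hu
  · rw [map_pow]
    have : t ≡ 1 [MOD orderOf (f g)] := ht1.of_dvd hk
    calc f g ^ t = f g ^ 1 := (pow_eq_pow_iff_modEq).mpr this
    _ = f g := pow_one _

/-- conjugacy class size equals centralizer index -/
lemma card_isConj_eq (x : G) :
    Nat.card {z : G | IsConj x z} = (Subgroup.centralizer {x}).index := by
  have hset : {z : G | IsConj x z} = MulAction.orbit (ConjAct G) x := by
    ext z
    rw [Set.mem_setOf_eq, ConjAct.mem_orbit_conjAct, isConj_comm]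
  rw [hset]
  have h1 : Nat.card (MulAction.orbit (ConjAct G) x) =
      Nat.card (ConjAct G ⧸ MulAction.stabilizer (ConjAct G) x) :=
    Nat.card_congr (MulAction.orbitEquivQuotientStabilizer (ConjAct G) x)
  rw [h1, ← Subgroup.index_eq_card, Subgroup.centralizer_eq_comap_stabilizer,
    ]
  exact (Subgroup.index_comap_of_surjective (f := ConjAct.toConjAct.toMonoidHom) _
    ConjAct.toConjAct.surjective).symm

lemma card_isConj_map_dvd [Finite G] {Q : Type*} [Group Q] (f : G →* Q)
    (hf : Function.Surjective f) (x : G) :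
    Nat.card {z : Q | IsConj (f x) z} ∣ Nat.card {z : G | IsConj x z} := by
  rw [card_isConj_eq, card_isConj_eq]
  have hle : Subgroup.centralizer {x} ≤ (Subgroup.centralizer {f x}).comap f := by
    intro c hc
    rw [Subgroup.mem_comap, Subgroup.mem_centralizer_iff]
    rintro y ⟨rfl⟩
    have hxc := hc x (Set.mem_singleton x)
    calc f x * f c = f (x * c) := (map_mul f x c).symm
    _ = f (c * x) := by rw [hxc]
    _ = f c * f x := map_mul f c x
  rw [← Subgroup.index_comap_of_surjective _ hf]
  exact Subgroup.index_dvd_of_le hle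

lemma card_subgroupOf_of_le {H K : Subgroup G} (h : H ≤ K) :
    Nat.card ↥(H.subgroupOf K) = Nat.card ↥H :=
  Nat.card_congr (Subgroup.subgroupOfEquivOfLe h).toEquiv

lemma card_subgroupOf (H K : Subgroup G) :
    Nat.card ↥(H.subgroupOf K) = Nat.card ↥(H ⊓ K) := by
  rw [← Subgroup.inf_subgroupOf_right]
  exact card_subgroupOf_of_le inf_le_right

/-- relIndex into a normal subgroup divides index -/
lemma relIndex_dvd_index_normal_right [Finite G] (C K : Subgroup G) [hK : K.Normal] :
    C.relIndex K ∣ C.index := by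
  have key : C.relIndex K = C.relIndex (C ⊔ K) := by
    have e1 : C.relIndex (C ⊔ K) * Nat.card ↥C = Nat.card ↥(C ⊔ K) := by
      have := Subgroup.index_mul_card (C.subgroupOf (C ⊔ K))
      rwa [card_subgroupOf_of_le (le_sup_left : C ≤ C ⊔ K)] at this
    have e2 : K.relIndex C * Nat.card ↥K = Nat.card ↥(C ⊔ K) := by
      have := Subgroup.index_mul_card (K.subgroupOf (C ⊔ K))
      rwa [card_subgroupOf_of_le (le_sup_right : K ≤ C ⊔ K),
        show (K.subgroupOf (C ⊔ K)).index = K.relIndex C from Subgroup.relIndex_sup_right C K] at this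
    have e4 : K.relIndex C * Nat.card ↥(C ⊓ K) = Nat.card ↥C := by
      have := Subgroup.index_mul_card (K.subgroupOf C)
      rwa [card_subgroupOf K C, show K ⊓ C = C ⊓ K from inf_comm K C] at this
    have e5 : C.relIndex K * Nat.card ↥(C ⊓ K) = Nat.card ↥K := by
      have := Subgroup.index_mul_card (C.subgroupOf K)
      rwa [card_subgroupOf C K] at this
    have hpos1 : 0 < K.relIndex C :=
      Nat.pos_of_ne_zero (Subgroup.index_ne_zero_of_finite (H := K.subgroupOf C))
    have hpos2 : 0 < Nat.card ↥(C ⊓ K) := Nat.card_pos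
    have main : C.relIndex (C ⊔ K) * (K.relIndex C * Nat.card ↥(C ⊓ K)) =
        C.relIndex K * Nat.card ↥(C ⊓ K) * K.relIndex C := by
      rw [e4, e1, e5, ← e2, mul_comm]
    have : C.relIndex (C ⊔ K) * (K.relIndex C * Nat.card ↥(C ⊓ K)) =
        C.relIndex K * (K.relIndex C * Nat.card ↥(C ⊓ K)) := by
      rw [main]; ring
    exact (Nat.eq_of_mul_eq_mul_right (Nat.mul_pos hpos1 hpos2) this).symm
  rw [key]
  exact Subgroup.relIndex_dvd_index_of_le le_sup_left

/-- a normal π-subgroup is centralized by any element whose conjugacy class size is a π'-number -/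
lemma normal_pi_le_centralizer [Finite G] {K : Subgroup G} [hKn : K.Normal]
    (hK : PiNum π (Nat.card K)) {x : G}
    (hx : ∀ ℓ ∈ π, ℓ.Prime → ¬ ℓ ∣ Nat.card {z : G | IsConj x z}) :
    K ≤ Subgroup.centralizer {x} := by
  set C := Subgroup.centralizer {x}
  have h1 : C.relIndex K ∣ Nat.card K := Subgroup.index_dvd_card (C.subgroupOf K)
  have h2 : C.relIndex K ∣ C.index := relIndex_dvd_index_normal_right C K
  have hpi : PiNum π (C.relIndex K) := PiNum.of_dvd h1 hK
  have hpi' : PiNum πᶜ (C.relIndex K) := by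
    intro ℓ hℓ hd
    intro hmem
    exact hx ℓ hmem hℓ (by rw [card_isConj_eq]; exact hd.trans h2)
  have hne : C.relIndex K ≠ 0 := Subgroup.index_ne_zero_of_finite (H := C.subgroupOf K)
  have := hpi.eq_one hpi' hne
  exact (Subgroup.relIndex_eq_one).mp this


/-- the set of normal π-subgroups -/
def RadSet (π : Set ℕ) (G : Type*) [Group G] : Set (Subgroup G) :=
  {N : Subgroup G | N.Normal ∧ PiNum π (Nat.card N)}

lemma bot_mem_radSet : (⊥ : Subgroup G) ∈ RadSet π G := by
  refine ⟨inferInstance, ?_⟩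
  rw [show Nat.card ↥(⊥ : Subgroup G) = 1 from Subgroup.card_bot]
  exact PiNum.one' π

lemma sup_mem_radSet [Finite G] {A B : Subgroup G} (hA : A ∈ RadSet π G) (hB : B ∈ RadSet π G) :
    A ⊔ B ∈ RadSet π G := by
  obtain ⟨hA1, hA2⟩ := hA
  obtain ⟨hB1, hB2⟩ := hB
  haveI := hA1; haveI := hB1
  refine ⟨Subgroup.sup_normal A B, ?_⟩
  have e1 : (A.subgroupOf (A ⊔ B)).index * Nat.card ↥A = Nat.card ↥(A ⊔ B) := by
    have := Subgroup.index_mul_card (A.subgroupOf (A ⊔ B))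
    rwa [card_subgroupOf_of_le (le_sup_left : A ≤ A ⊔ B)] at this
  have e2 : (A.subgroupOf (A ⊔ B)).index = A.relIndex B := by
    rw [show A ⊔ B = B ⊔ A from sup_comm A B]
    exact Subgroup.relIndex_sup_right B A
  have e3 : A.relIndex B ∣ Nat.card ↥B := Subgroup.index_dvd_card (A.subgroupOf B)
  have : Nat.card ↥(A ⊔ B) ∣ Nat.card ↥B * Nat.card ↥A := by
    rw [← e1, e2]
    exact Nat.mul_dvd_mul_right e3 _
  exact PiNum.of_dvd this (hB2.mul hA2)

/-- the π-radical: the largest normal π-subgroup -/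
def rad (π : Set ℕ) (G : Type*) [Group G] : Subgroup G := sSup (RadSet π G)

lemma rad_mem_radSet [Finite G] : rad π G ∈ RadSet π G := by
  obtain ⟨M, hM, hmax⟩ := Set.Finite.exists_maximalFor id (RadSet π G) (Set.toFinite _)
    ⟨⊥, bot_mem_radSet⟩
  have hgreat : ∀ N ∈ RadSet π G, N ≤ M := by
    intro N hN
    have := hmax (sup_mem_radSet hN hM) (le_sup_right : M ≤ N ⊔ M)
    simpa using le_sup_left.trans this
  have : rad π G = M := le_antisymm (sSup_le hgreat) (le_sSup hM)
  rw [this]; exact hM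

lemma le_rad {N : Subgroup G} (hN : N.Normal) (hpi : PiNum π (Nat.card N)) : N ≤ rad π G :=
  le_sSup ⟨hN, hpi⟩

instance rad_normal [Finite G] : (rad π G).Normal := (rad_mem_radSet).1

lemma rad_pi [Finite G] : PiNum π (Nat.card (rad π G)) := (rad_mem_radSet).2


end One

section OneB
variable {G : Type*} [Group G] {π : Set ℕ} [Finite G]

/-- the image in `G` of the radical of a normal subgroup `M`. -/
noncomputable def radMap (π : Set ℕ) (M : Subgroup G) : Subgroup G :=
  (rad π ↥M).map M.subtype

lemma radMap_le (M : Subgroup G) : radMap π M ≤ M := by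
  rintro x ⟨y, _, rfl⟩; exact y.2

lemma radMap_pi (M : Subgroup G) : PiNum π (Nat.card (radMap π M)) := by
  have : Nat.card (radMap π M) = Nat.card (rad π ↥M) :=
    (Nat.card_congr (Subgroup.equivMapOfInjective _ _ M.subtype_injective).toEquiv).symm
  rw [this]; exact rad_pi

lemma radMap_conj_mem_of_mem (M : Subgroup G) {m r : G} (hm : m ∈ M) (hr : r ∈ radMap π M) :
    m * r * m⁻¹ ∈ radMap π M := by
  obtain ⟨r', hr', rfl⟩ := hr
  have := rad_normal (G := ↥M) (π := π) |>.conj_mem r' hr' ⟨m, hm⟩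
  exact ⟨_, this, rfl⟩

lemma le_radMap {M K : Subgroup G} (hKM : K ≤ M)
    (hKnorm : ∀ m ∈ M, ∀ k ∈ K, m * k * m⁻¹ ∈ K) (hKpi : PiNum π (Nat.card K)) :
    K ≤ radMap π M := by
  have hnorm : (K.subgroupOf M).Normal := by
    constructor
    intro n hn g
    have : (g : G) * n * (g : G)⁻¹ ∈ K := hKnorm g g.2 n hn
    simpa [Subgroup.mem_subgroupOf] using this
  have hle : K.subgroupOf M ≤ rad π ↥M := le_rad hnorm (by rwa [card_subgroupOf_of_le hKM])
  have : (K.subgroupOf M).map M.subtype ≤ radMap π M := Subgroup.map_mono hle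
  rwa [Subgroup.subgroupOf_map_subtype, inf_eq_left.mpr hKM] at this

lemma radMap_normal (M : Subgroup G) [hM : M.Normal] : (radMap π M).Normal := by
  constructor
  intro r hr g
  have key : (radMap π M).map (MulAut.conj g).toMonoidHom ≤ radMap π M := by
    apply le_radMap
    · rintro x ⟨y, hy, rfl⟩
      exact hM.conj_mem y (radMap_le M hy) g
    · rintro m hm k ⟨y, hy, rfl⟩
      have h1 : g⁻¹ * m * g ∈ M := by
        have := hM.conj_mem m hm g⁻¹; simpa using this
      have h2 : (g⁻¹ * m * g) * y * (g⁻¹ * m * g)⁻¹ ∈ radMap π M :=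
        radMap_conj_mem_of_mem M h1 hy
      refine ⟨_, h2, ?_⟩
      simp [MulAut.conj_apply]
      group
    · rw [show Nat.card ((radMap π M).map (MulAut.conj g).toMonoidHom) = Nat.card (radMap π M) from
        (Nat.card_congr (Subgroup.equivMapOfInjective _ _ (MulAut.conj g).injective).toEquiv).symm]
      exact radMap_pi M
  exact key ⟨r, hr, rfl⟩

lemma radMap_eq_bot_iff (M : Subgroup G) : radMap π M = ⊥ ↔ rad π ↥M = ⊥ := by
  unfold radMap
  rw [Subgroup.map_eq_bot_iff_of_injective _ M.subtype_injective]


end OneB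

section Two
variable {G : Type*} [Group G] {π : Set ℕ}
/-- separability passes to subgroups -/
lemma isPiSeparable_subgroup (H : Subgroup G) (hsep : IsPiSeparable G π) :
    IsPiSeparable ↥H π := by
  obtain ⟨n, s, h0, hl, hf⟩ := hsep
  refine ⟨n, fun i => (s i).subgroupOf H, by dsimp only; rw [h0]; exact Subgroup.bot_subgroupOf H,
    by dsimp only; rw [hl]; exact Subgroup.top_subgroupOf H, fun i => ?_⟩
  dsimp only
  obtain ⟨hle, hnorm, hfac⟩ := hf i
  set A := (s i.castSucc).subgroupOf H with hA
  set B := (s i.succ).subgroupOf H with hB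
  have hAB : A ≤ B := Subgroup.comap_mono hle
  -- the natural hom from B to the big factor
  have hmem : ∀ x : ↥B, ((x : ↥H) : G) ∈ s i.succ := fun x => x.2
  let ψ : ↥B →* ↥(s i.succ) := {
    toFun := fun x => ⟨((x : ↥H) : G), hmem x⟩
    map_one' := rfl
    map_mul' := fun x y => rfl }
  let φ : ↥B →* (↥(s i.succ) ⧸ (s i.castSucc).subgroupOf (s i.succ)) :=
    (QuotientGroup.mk' _).comp ψ
  have hker : φ.ker = A.subgroupOf B := by
    ext x
    rw [MonoidHom.mem_ker, Subgroup.mem_subgroupOf]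
    show (QuotientGroup.mk (ψ x) = 1) ↔ _
    rw [QuotientGroup.eq_one_iff, Subgroup.mem_subgroupOf, Subgroup.mem_subgroupOf]
    rfl
  constructor
  · exact hAB
  constructor
  · rw [← hker]; exact MonoidHom.normal_ker φ
  · -- card divides
    have hdvd : Nat.card (↥B ⧸ A.subgroupOf B) ∣
        Nat.card (↥(s i.succ) ⧸ (s i.castSucc).subgroupOf (s i.succ)) := by
      rw [← hker]
      have : Nat.card (↥B ⧸ φ.ker) = Nat.card φ.range :=
        Nat.card_congr (QuotientGroup.quotientKerEquivRange φ).toEquiv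
      rw [this]
      exact Subgroup.card_subgroup_dvd_card φ.range
    rcases hfac with h | h
    · exact Or.inl fun ℓ hℓ hd => h ℓ hℓ (hd.trans hdvd)
    · exact Or.inr fun ℓ hℓ hd => h ℓ hℓ (hd.trans hdvd)

/-- separability passes to quotients (images under surjections) -/
lemma isPiSeparable_of_surjective {Q : Type*} [Group Q] (f : G →* Q)
    (hf : Function.Surjective f) (hsep : IsPiSeparable G π) : IsPiSeparable Q π := by
  obtain ⟨n, s, h0, hl, hfct⟩ := hsep
  refine ⟨n, fun i => (s i).map f, by dsimp only; rw [h0]; exact Subgroup.map_bot f,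
    by dsimp only; rw [hl, ← MonoidHom.range_eq_map]; exact MonoidHom.range_eq_top.mpr hf, fun i => ?_⟩
  dsimp only
  obtain ⟨hle, hnorm, hfac⟩ := hfct i
  set A := (s i.castSucc).map f with hA
  set B := (s i.succ).map f with hB
  have hAB : A ≤ B := Subgroup.map_mono hle
  constructor
  · exact hAB
  have hnormal : (A.subgroupOf B).Normal := by
    constructor
    rintro ⟨a, ha⟩ hmem ⟨b, hb⟩
    obtain ⟨y, hy, hyeq⟩ := hb
    rw [Subgroup.mem_subgroupOf] at hmem ⊢
    simp only at hmem ⊢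
    obtain ⟨z, hz, hzeq⟩ := hmem
    show b * a * b⁻¹ ∈ A
    have hba : b * a * b⁻¹ = f (y * z * y⁻¹) := by
      rw [map_mul, map_mul, map_inv, hyeq, hzeq]
    rw [hba]
    have : y * z * y⁻¹ ∈ s i.castSucc := by
      have := hnorm.conj_mem ⟨z, hle hz⟩ (by rwa [Subgroup.mem_subgroupOf]) ⟨y, hy⟩
      rwa [Subgroup.mem_subgroupOf] at this
    exact ⟨_, this, rfl⟩
  refine ⟨hnormal, ?_⟩
  -- surjection from old factor onto new factor
  have hmem : ∀ x : ↥(s i.succ), f ((x : G)) ∈ B := fun x => ⟨x, x.2, rfl⟩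
  let ψ : ↥(s i.succ) →* ↥B := {
    toFun := fun x => ⟨f (x : G), hmem x⟩
    map_one' := by ext; simp
    map_mul' := fun x y => by ext; simp }
  let φ : ↥(s i.succ) →* (↥B ⧸ A.subgroupOf B) := (QuotientGroup.mk' _).comp ψ
  have hφsurj : Function.Surjective φ := by
    intro q
    induction q using QuotientGroup.induction_on with
    | H b =>
      obtain ⟨x, hx, hxe⟩ := b.2
      refine ⟨⟨x, hx⟩, ?_⟩
      show QuotientGroup.mk (ψ ⟨x, hx⟩) = QuotientGroup.mk b
      congr 1
      ext
      exact hxe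
  have hkerle : (s i.castSucc).subgroupOf (s i.succ) ≤ φ.ker := by
    intro x hx
    rw [Subgroup.mem_subgroupOf] at hx
    rw [MonoidHom.mem_ker]
    show QuotientGroup.mk (ψ x) = 1
    rw [QuotientGroup.eq_one_iff, Subgroup.mem_subgroupOf]
    exact ⟨(x : G), hx, rfl⟩
  -- factor through the quotient
  let χ := QuotientGroup.lift _ φ (fun x hx => MonoidHom.mem_ker.mp (hkerle hx))
  have hχsurj : Function.Surjective χ := by
    intro q
    obtain ⟨x, hx⟩ := hφsurj q
    exact ⟨QuotientGroup.mk x, hx⟩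
  have hdvd : Nat.card (↥B ⧸ A.subgroupOf B) ∣
      Nat.card (↥(s i.succ) ⧸ (s i.castSucc).subgroupOf (s i.succ)) :=
    Subgroup.card_dvd_of_surjective χ hχsurj
  rcases hfac with h | h
  · exact Or.inl fun ℓ hℓ hd => h ℓ hℓ (hd.trans hdvd)
  · exact Or.inr fun ℓ hℓ hd => h ℓ hℓ (hd.trans hdvd)


lemma card_eq_one_of_bot_eq_top {G : Type*} [Group G] [Finite G]
    (h : (⊥ : Subgroup G) = ⊤) : Nat.card G = 1 := by
  have : ∀ g : G, g = 1 := fun g => by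
    have : g ∈ (⊥ : Subgroup G) := by rw [h]; trivial
    simpa [Subgroup.mem_bot] using this
  rw [Nat.card_eq_one_iff_unique]
  exact ⟨⟨fun a b => by rw [this a, this b]⟩, ⟨1⟩⟩

/-- a group with no proper nontrivial normal subgroup, if π-separable, is a π-group or π'-group -/
lemma card_pinum_of_no_proper {G : Type*} [Group G] [Finite G]
    (hsimple : ∀ M : Subgroup G, M.Normal → M = ⊥ ∨ M = ⊤)
    (hsep : IsPiSeparable G π) (hG : Nat.card G ≠ 1) :
    PiNum π (Nat.card G) ∨ PiNum πᶜ (Nat.card G) := by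
  classical
  obtain ⟨n, s, h0, hl, hf⟩ := hsep
  have hbotne : (⊥ : Subgroup G) ≠ ⊤ := fun h => hG (card_eq_one_of_bot_eq_top h)
  have hn : 0 < n := by
    rcases Nat.eq_zero_or_pos n with h | h
    · subst h
      exact absurd (h0.symm.trans (by rw [show (0 : Fin 1) = Fin.last 0 from rfl, hl])) hbotne
    · exact h
  set S : Finset (Fin n) := Finset.univ.filter (fun i => s i.castSucc ≠ ⊤) with hS
  have hi0 : (⟨0, hn⟩ : Fin n) ∈ S := by
    rw [hS, Finset.mem_filter]
    refine ⟨Finset.mem_univ _, ?_⟩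
    have : (⟨0, hn⟩ : Fin n).castSucc = (0 : Fin (n+1)) := by ext; rfl
    rw [this, h0]
    exact hbotne
  set i := S.max' ⟨_, hi0⟩ with hi
  have hiS : i ∈ S := S.max'_mem _
  have hine : s i.castSucc ≠ ⊤ := by
    rw [hS] at hiS; exact (Finset.mem_filter.mp hiS).2
  have hsucc : s i.succ = ⊤ := by
    by_contra h
    have hne : i.succ ≠ Fin.last n := by
      intro he
      rw [he, hl] at h
      exact h rfl
    have hlt : i.val + 1 < n := by
      rcases Nat.lt_or_ge (i.val + 1) n with h' | h'
      · exact h'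
      · exfalso
        have : i.val + 1 = n := le_antisymm i.isLt h'
        exact hne (by ext; simpa using this)
    have hj : (⟨i.val + 1, hlt⟩ : Fin n) ∈ S := by
      rw [hS, Finset.mem_filter]
      refine ⟨Finset.mem_univ _, ?_⟩
      have : (⟨i.val + 1, hlt⟩ : Fin n).castSucc = i.succ := by ext; rfl
      rwa [this]
    have := S.le_max' _ hj
    rw [← hi] at this
    exact absurd (Fin.lt_iff_val_lt_val.mpr (Nat.lt_succ_self i.val)) (not_lt.mpr this)
  obtain ⟨hle, hnorm, hfac⟩ := hf i
  set B := s i.castSucc with hB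
  have hBnormal : B.Normal := by
    constructor
    intro b hb g
    have hg : g ∈ s i.succ := by rw [hsucc]; trivial
    have := hnorm.conj_mem ⟨b, hle hb⟩ (by rwa [Subgroup.mem_subgroupOf]) ⟨g, hg⟩
    rwa [Subgroup.mem_subgroupOf] at this
  have hBbot : B = ⊥ := (hsimple B hBnormal).resolve_right hine
  have hcard : Nat.card (↥(s i.succ) ⧸ B.subgroupOf (s i.succ)) = Nat.card G := by
    rw [← Subgroup.index_eq_card, hBbot, Subgroup.bot_subgroupOf, Subgroup.index_bot]
    rw [hsucc]
    exact Nat.card_congr Subgroup.topEquiv.toEquiv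
  rcases hfac with h | h
  · exact Or.inl fun ℓ hℓ hd => h ℓ hℓ (by rw [hcard]; exact hd)
  · exact Or.inr fun ℓ hℓ hd => h ℓ hℓ (by rw [hcard]; exact hd)

/-- Lemma D: a nontrivial π-separable group has a nontrivial normal π- or π'-subgroup -/
lemma rad_ne_bot_aux : ∀ (N : ℕ) (G : Type u) [Group G] [Finite G], Nat.card G ≤ N →
    IsPiSeparable G π → Nat.card G ≠ 1 → (rad π G ≠ ⊥ ∨ rad πᶜ G ≠ ⊥) := by
  intro N
  induction N with
  | zero => intro G _ _ hle _ _; exact absurd (Nat.card_pos.trans_le hle) (lt_irrefl 0)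
  | succ N ih =>
    intro G _ _ hle hsep hG
    by_cases hs : ∀ M : Subgroup G, M.Normal → M = ⊥ ∨ M = ⊤
    · have htopbot : (⊤ : Subgroup G) ≠ ⊥ := fun h => hG (card_eq_one_of_bot_eq_top h.symm)
      have hcardtop : Nat.card (⊤ : Subgroup G) = Nat.card G :=
        Nat.card_congr Subgroup.topEquiv.toEquiv
      rcases card_pinum_of_no_proper hs hsep hG with h | h
      · exact Or.inl fun hbot => htopbot (le_bot_iff.mp (hbot ▸ le_rad inferInstance (hcardtop ▸ h)))
      · exact Or.inr fun hbot => htopbot (le_bot_iff.mp (hbot ▸ le_rad inferInstance (hcardtop ▸ h)))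
    · push_neg at hs
      obtain ⟨M, hMnorm, hMbot, hMtop⟩ := hs
      haveI := hMnorm
      have hMcard : Nat.card ↥M < Nat.card G := by
        have h1 : Nat.card ↥M ∣ Nat.card G := Subgroup.card_subgroup_dvd_card M
        have h2 : Nat.card ↥M ≠ Nat.card G := fun h => hMtop (Subgroup.eq_top_of_card_eq M h)
        exact lt_of_le_of_ne (Nat.le_of_dvd Nat.card_pos h1) h2
      have hM1 : Nat.card ↥M ≠ 1 := fun h => hMbot (Subgroup.eq_bot_of_card_eq M h)
      have := ih ↥M (by omega) (isPiSeparable_subgroup M hsep) hM1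
      rcases this with h | h
      · refine Or.inl fun hbot => ?_
        have h1 : radMap π M ≠ ⊥ := fun he => h ((radMap_eq_bot_iff M).mp he)
        have h2 : radMap π M ≤ rad π G := le_rad (radMap_normal M) (radMap_pi M)
        exact h1 (le_bot_iff.mp (hbot ▸ h2))
      · refine Or.inr fun hbot => ?_
        have h1 : radMap πᶜ M ≠ ⊥ := fun he => h ((radMap_eq_bot_iff M).mp he)
        have h2 : radMap πᶜ M ≤ rad πᶜ G := le_rad (radMap_normal M) (radMap_pi M)
        exact h1 (le_bot_iff.mp (hbot ▸ h2))

/-- Lemma E: a minimal normal subgroup of a π-separable group is a π-group or a π'-group -/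
lemma min_normal_pinum {Q : Type u} [Group Q] [Finite Q] (hsep : IsPiSeparable Q π)
    (M : Subgroup Q) (hM : M.Normal) (hbot : M ≠ ⊥)
    (hmin : ∀ N : Subgroup Q, N.Normal → N ≤ M → N = ⊥ ∨ N = M) :
    PiNum π (Nat.card M) ∨ PiNum πᶜ (Nat.card M) := by
  haveI := hM
  have h1 : Nat.card ↥M ≠ 1 := fun h => hbot (Subgroup.eq_bot_of_card_eq M h)
  rcases rad_ne_bot_aux (Nat.card ↥M) ↥M (le_refl _) (isPiSeparable_subgroup M hsep) h1 with h | h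
  · left
    have hR : radMap π M ≠ ⊥ := fun he => h ((radMap_eq_bot_iff M).mp he)
    have hRM : radMap π M = M := (hmin _ (radMap_normal M) (radMap_le M)).resolve_left hR
    rw [← hRM]; exact radMap_pi M
  · right
    have hR : radMap πᶜ M ≠ ⊥ := fun he => h ((radMap_eq_bot_iff M).mp he)
    have hRM : radMap πᶜ M = M := (hmin _ (radMap_normal M) (radMap_le M)).resolve_left hR
    rw [← hRM]; exact radMap_pi M


section Three
variable {G : Type*} [Group G] {π : Set ℕ}
/-- The Hall–Higman style step: a normal subgroup `M` with a central (in `M`) normal π-subgroup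
`W` of π'-index in `M` yields a normal π'-subgroup of `G` of order `|M : W|`. -/
lemma HHstep [Finite G] (W M : Subgroup G) (hWM : W ≤ M) [hMn : M.Normal] [hWn : W.Normal]
    (hcen : ∀ m ∈ M, ∀ w ∈ W, m * w = w * m)
    (hWpi : PiNum π (Nat.card W))
    (hfac : PiNum πᶜ ((W.subgroupOf M).index)) :
    ∃ H : Subgroup G, H.Normal ∧ Nat.card H = (W.subgroupOf M).index := by
  set W' := W.subgroupOf M with hW'
  haveI hW'n : W'.Normal := hWn.subgroupOf M
  have hcardW' : Nat.card W' = Nat.card W := card_subgroupOf_of_le hWM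
  have hcop : Nat.Coprime (Nat.card W') W'.index := by
    rw [hcardW']
    exact coprime_of_pinum hWpi hfac
  obtain ⟨H', hH'⟩ := Subgroup.exists_right_complement'_of_coprime hcop
  have hcardH' : Nat.card H' = W'.index := by
    have h1 : Nat.card W' * Nat.card H' = Nat.card ↥M := hH'.card_mul
    have h2 : W'.index * Nat.card W' = Nat.card ↥M := Subgroup.index_mul_card W'
    have := h1.trans h2.symm
    exact Nat.eq_of_mul_eq_mul_left Nat.card_pos (by rw [this]; ring)
  -- orderOf of elements of W is a π-number, of H' a π'-number
  have horderW : ∀ w : G, w ∈ W → PiNum π (orderOf w) := by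
    intro w hw
    rw [← Subgroup.orderOf_mk (H := W) w hw]
    exact PiNum.of_dvd (orderOf_dvd_natCard _) hWpi
  -- characterization of H
  set H := H'.map M.subtype with hH
  have hHchar : ∀ g : G, g ∈ H ↔ g ∈ M ∧ PiNum πᶜ (orderOf g) := by
    intro g
    constructor
    · rintro ⟨y, hy, rfl⟩
      refine ⟨y.2, ?_⟩
      show PiNum πᶜ (orderOf (y : G))
      rw [Subgroup.orderOf_coe y, ← Subgroup.orderOf_mk (H := H') y hy]
      exact PiNum.of_dvd (orderOf_dvd_natCard _) (hcardH' ▸ hfac)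
    · rintro ⟨hgM, hord⟩
      set m : ↥M := ⟨g, hgM⟩ with hm
      obtain ⟨⟨w, h⟩, hwh⟩ := hH'.2 m
      have hwh' : (w : ↥M) * (h : ↥M) = m := hwh
      have hwW' : (w : ↥M) ∈ W' := SetLike.mem_coe.mp w.2
      have hhH' : (h : ↥M) ∈ H' := SetLike.mem_coe.mp h.2
      have hwW : ((w : ↥M) : G) ∈ W := Subgroup.mem_subgroupOf.mp hwW'
      have hcomm : Commute (w : ↥M) (h : ↥M) := by
        have := hcen ((h : ↥M) : G) (h : ↥M).2 ((w : ↥M) : G) hwW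
        exact Subtype.ext (by push_cast; exact this.symm)
      have hordw : PiNum π (orderOf (w : ↥M)) := by
        rw [← Subgroup.orderOf_coe (w : ↥M)]
        exact horderW _ hwW
      have hordh : PiNum πᶜ (orderOf (h : ↥M)) := by
        rw [← Subgroup.orderOf_mk (H := H') _ hhH']
        exact PiNum.of_dvd (orderOf_dvd_natCard _) (hcardH' ▸ hfac)
      have hco : Nat.Coprime (orderOf (w : ↥M)) (orderOf (h : ↥M)) :=
        coprime_of_pinum hordw hordh
      have hmul : orderOf m = orderOf (w : ↥M) * orderOf (h : ↥M) := by
        rw [← hwh']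
        exact hcomm.orderOf_mul_eq_mul_orderOf_of_coprime hco
      have hordm : PiNum πᶜ (orderOf m) := by
        rw [hm, Subgroup.orderOf_mk g hgM]; exact hord
      have hw1 : orderOf (w : ↥M) = 1 := by
        refine PiNum.eq_one hordw ?_ (orderOf_pos _).ne'
        exact PiNum.of_dvd (by rw [hmul]; exact dvd_mul_right _ _) hordm
      have hweq : (w : ↥M) = 1 := orderOf_eq_one_iff.mp hw1
      have hmh : m = (h : ↥M) := by rw [← hwh', hweq, one_mul]
      exact ⟨m, by rw [hmh]; exact hhH', rfl⟩
  have hcardH : Nat.card H = W'.index := by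
    rw [← hcardH']
    exact (Nat.card_congr (Subgroup.equivMapOfInjective _ _ M.subtype_injective).toEquiv).symm
  refine ⟨H, ?_, hcardH⟩
  constructor
  intro r hr g
  rw [hHchar] at hr ⊢
  obtain ⟨hrM, hrord⟩ := hr
  refine ⟨hMn.conj_mem r hrM g, ?_⟩
  have : g * r * g⁻¹ = (MulAut.conj g).toMonoidHom r := by simp [MulAut.conj_apply]
  rw [this, orderOf_injective _ (MulAut.conj g).injective r]
  exact hrord

end Three

section Four
variable {G : Type u} [Group G] {π : Set ℕ}
/-- Hall-Higman 1.2.3 under the π'-radical-trivial hypothesis. -/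
lemma centralizer_rad_le [Finite G] (hsep : IsPiSeparable G π) (hb : rad πᶜ G = ⊥) :
    Subgroup.centralizer ((rad π G : Subgroup G) : Set G) ≤ rad π G := by
  classical
  set K := rad π G with hK
  haveI : K.Normal := rad_normal
  set C := Subgroup.centralizer (K : Set G) with hC
  haveI hCnorm : C.Normal := by
    constructor
    intro c hc g
    rw [hC, Subgroup.mem_centralizer_iff] at hc ⊢
    intro k hk
    have hk' : g⁻¹ * k * g ∈ K := by
      have := (rad_normal (π := π) (G := G)).conj_mem k hk g⁻¹
      simpa using this
    have := hc _ hk'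
    -- (g⁻¹ k g) c = c (g⁻¹ k g)  ⇒  k (g c g⁻¹) = (g c g⁻¹) k
    have h2 := congrArg (fun t => g * t * g⁻¹) this
    simpa [mul_assoc] using h2
  by_contra hCK
  set W := C ⊓ K with hW
  haveI : W.Normal := Subgroup.normal_inf_normal C K
  have hWK : W ≤ K := inf_le_right
  have hWC : W ≤ C := inf_le_left
  have hWpi : PiNum π (Nat.card W) := PiNum.of_dvd (Subgroup.card_dvd_of_le hWK) rad_pi
  have hWC' : W ≠ C := fun h => hCK (h ▸ hWK)
  -- minimal normal subgroup M with W < M ≤ C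
  set S : Set (Subgroup G) := {N | N.Normal ∧ W < N ∧ N ≤ C} with hS
  have hCS : C ∈ S := ⟨hCnorm, lt_of_le_of_ne hWC hWC', le_refl C⟩
  obtain ⟨M, hMS, hMmin⟩ := Set.Finite.exists_minimalFor id S (Set.toFinite S) ⟨C, hCS⟩
  obtain ⟨hMnorm, hWM, hMC⟩ := hMS
  haveI := hMnorm
  -- pass to G ⧸ W
  set φ := QuotientGroup.mk' W with hφ
  have hφs : Function.Surjective φ := QuotientGroup.mk'_surjective W
  set Mb := M.map φ with hMb
  haveI hMbnorm : Mb.Normal := hMnorm.map φ hφs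
  have hMbne : Mb ≠ ⊥ := by
    obtain ⟨m, hmM, hmW⟩ := SetLike.exists_of_lt hWM
    intro h
    have : φ m ∈ Mb := ⟨m, hmM, rfl⟩
    rw [h, Subgroup.mem_bot] at this
    rw [← QuotientGroup.ker_mk' W, MonoidHom.mem_ker] at hmW
    exact hmW this
  have hMbmin : ∀ Nb : Subgroup (G ⧸ W), Nb.Normal → Nb ≤ Mb → Nb = ⊥ ∨ Nb = Mb := by
    intro Nb hNbnorm hNbMb
    haveI h1 : (Nb.comap φ).Normal := hNbnorm.comap φ
    set P := Nb.comap φ ⊓ M with hP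
    haveI hPnorm : P.Normal := Subgroup.normal_inf_normal _ _
    have hWP : W ≤ P := by
      refine le_inf (fun w hw => ?_) hWM.le
      rw [Subgroup.mem_comap]
      have hw1 : φ w = 1 := by
        rw [← MonoidHom.mem_ker, QuotientGroup.ker_mk']; exact hw
      rw [hw1]; exact Nb.one_mem
    have hNbP : Nb = P.map φ := by
      apply le_antisymm
      · intro n hn
        obtain ⟨m, hmM, rfl⟩ := hNbMb hn
        exact ⟨m, Subgroup.mem_inf.mpr ⟨Subgroup.mem_comap.mpr hn, hmM⟩, rfl⟩
      · rintro _ ⟨p, hp, rfl⟩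
        exact Subgroup.mem_comap.mp hp.1
    rcases eq_or_lt_of_le hWP with hWPeq | hWPlt
    · left
      rw [hNbP, ← hWPeq]
      rw [Subgroup.map_eq_bot_iff, hφ, QuotientGroup.ker_mk']
    · right
      have hPS : P ∈ S := ⟨hPnorm, hWPlt, le_trans inf_le_right hMC⟩
      have hMP : M = P := le_antisymm (hMmin hPS (inf_le_right : P ≤ M)) inf_le_right
      rw [hNbP, ← hMP]
  have hsepb : IsPiSeparable (G ⧸ W) π := isPiSeparable_of_surjective φ hφs hsep
  have hcardMb : Nat.card Mb = (W.subgroupOf M).index := by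
    have h := Subgroup.relIndex_ker (K := M) φ
    rw [hφ, QuotientGroup.ker_mk'] at h
    exact h.symm
  rcases min_normal_pinum hsepb Mb hMbnorm hMbne hMbmin with hpi | hpi'
  · have hcardM : PiNum π (Nat.card M) := by
      have hlag := Subgroup.index_mul_card (W.subgroupOf M)
      rw [card_subgroupOf_of_le hWM.le] at hlag
      rw [← hlag]
      exact PiNum.mul (by rw [← hcardMb]; exact hpi) hWpi
    have hMK : M ≤ K := le_rad hMnorm hcardM
    exact absurd (le_inf hMC hMK) (not_le_of_gt hWM)
  · have hcen : ∀ m ∈ M, ∀ w ∈ W, m * w = w * m := by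
      intro m hm w hw
      have hmC : m ∈ C := hMC hm
      rw [hC, Subgroup.mem_centralizer_iff] at hmC
      exact (hmC w (hWK hw)).symm
    obtain ⟨H, hHnorm, hHcard⟩ := HHstep W M hWM.le hcen hWpi (by rw [← hcardMb]; exact hpi')
    have hHpi' : PiNum πᶜ (Nat.card H) := by rw [hHcard, ← hcardMb]; exact hpi'
    have hHbot : H ≤ rad πᶜ G := le_rad hHnorm hHpi'
    rw [hb, le_bot_iff] at hHbot
    have h1 : Nat.card H = 1 := by rw [hHbot]; exact Subgroup.card_bot
    rw [hHcard] at h1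
    have h2 := Subgroup.index_eq_one.mp h1
    exact absurd (Subgroup.subgroupOf_eq_top.mp h2) (not_le_of_gt hWM)

end Four
end Two

lemma main_aux : ∀ (N : ℕ) (G : Type u) [Group G] [Finite G] (π : Set ℕ), Nat.card G ≤ N →
    IsPiSeparable G π →
    (∀ x : G, (∀ ℓ : ℕ, ℓ.Prime → ℓ ∣ orderOf x → ℓ ∈ π) →
      ∀ ℓ ∈ π, ℓ.Prime → ¬ ℓ ∣ Nat.card {z : G | IsConj x z}) →
    ∃ H : Subgroup G, PiNum π (Nat.card H) ∧
      (∀ ℓ : ℕ, ℓ.Prime → ℓ ∣ H.index → ℓ ∉ π) ∧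
      (∀ a b : G, a ∈ H → b ∈ H → a * b = b * a) := by
  intro N
  induction N with
  | zero =>
    intro G _ _ π hle _ _
    exact absurd (Nat.card_pos.trans_le hle) (lt_irrefl 0)
  | succ N ih =>
    intro G _ _ π hle hsep hcl
    by_cases hb : rad πᶜ G = ⊥
    · -- Case 2 : trivial π'-radical
      set K := rad π G with hKdef
      haveI : K.Normal := rad_normal
      have hcent : ∀ x : G, PiNum π (orderOf x) → K ≤ Subgroup.centralizer {x} :=
        fun x hx => normal_pi_le_centralizer rad_pi (hcl x hx)
      have hallpi : ∀ x : G, PiNum π (orderOf x) → x ∈ K := by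
        intro x hx
        have hxC : x ∈ Subgroup.centralizer ((K : Subgroup G) : Set G) := by
          rw [Subgroup.mem_centralizer_iff]
          intro k hk
          have hmem := hcent x hx hk
          rw [Subgroup.mem_centralizer_iff] at hmem
          exact (hmem x (Set.mem_singleton x)).symm
        exact centralizer_rad_le hsep hb hxC
      refine ⟨K, rad_pi, ?_, ?_⟩
      · intro ℓ hℓ hdvd hℓπ
        haveI := Fact.mk hℓ
        have hdq : ℓ ∣ Nat.card (G ⧸ K) := by rwa [← Subgroup.index_eq_card]
        obtain ⟨q, hq⟩ := exists_prime_orderOf_dvd_card' (G := G ⧸ K) ℓ hdq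
        have hqpi : PiNum π (orderOf q) := by
          rw [hq]
          intro r hr hrd
          rwa [(Nat.prime_dvd_prime_iff_eq hr hℓ).mp hrd]
        obtain ⟨x, hxpi, hxq⟩ := exists_pi_lift (QuotientGroup.mk' K)
          (QuotientGroup.mk'_surjective K) q hqpi
        have hxK : x ∈ K := hallpi x hxpi
        have hq1 : q = 1 := by
          rw [← hxq]
          rw [← MonoidHom.mem_ker, QuotientGroup.ker_mk']
          exact hxK
        rw [hq1, orderOf_one] at hq
        exact hℓ.ne_one hq.symm
      · intro a b ha hb'
        have hapi : PiNum π (orderOf a) :=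
          PiNum.of_dvd (Subgroup.orderOf_mk a ha ▸ orderOf_dvd_natCard (⟨a, ha⟩ : K)) rad_pi
        have := hcent a hapi hb'
        rw [Subgroup.mem_centralizer_iff] at this
        exact this a (Set.mem_singleton a)
    · -- Case 1 : nontrivial π'-radical, pass to the quotient
      set Nn := rad πᶜ G with hNndef
      haveI : Nn.Normal := rad_normal
      have hN2 : 2 ≤ Nat.card Nn := by
        have h1 : Nat.card Nn ≠ 1 := fun h => hb (Subgroup.eq_bot_of_card_eq _ h)
        have := Nat.card_pos (α := ↥Nn)
        omega
      set φ := QuotientGroup.mk' Nn with hφ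
      have hφs : Function.Surjective φ := QuotientGroup.mk'_surjective Nn
      have hcardlt : Nat.card (G ⧸ Nn) < Nat.card G := by
        have h := Subgroup.card_eq_card_quotient_mul_card_subgroup Nn
        have := Nat.card_pos (α := G ⧸ Nn)
        nlinarith
      have hsepQ : IsPiSeparable (G ⧸ Nn) π := isPiSeparable_of_surjective φ hφs hsep
      have hclQ : ∀ y : G ⧸ Nn, (∀ ℓ : ℕ, ℓ.Prime → ℓ ∣ orderOf y → ℓ ∈ π) →
          ∀ ℓ ∈ π, ℓ.Prime → ¬ ℓ ∣ Nat.card {z : G ⧸ Nn | IsConj y z} := by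
        intro y hy ℓ hℓπ hℓ hdvd
        obtain ⟨x, hxpi, rfl⟩ := exists_pi_lift φ hφs y hy
        exact hcl x hxpi ℓ hℓπ hℓ (hdvd.trans (card_isConj_map_dvd φ hφs x))
      obtain ⟨Hb, hHb1, hHb2, hHb3⟩ := ih (G ⧸ Nn) π (by omega) hsepQ hclQ
      set P := Hb.comap φ with hPdef
      have hNP : Nn ≤ P := by
        intro n hn
        rw [hPdef, Subgroup.mem_comap]
        have h1 : φ n = 1 := by rw [← MonoidHom.mem_ker, hφ, QuotientGroup.ker_mk']; exact hn
        rw [h1]; exact Hb.one_mem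
      set N' := Nn.subgroupOf P with hN'def
      haveI : N'.Normal := Subgroup.Normal.subgroupOf rad_normal P
      have hcardN' : Nat.card N' = Nat.card Nn := card_subgroupOf_of_le hNP
      have hindexN' : N'.index = Nat.card Hb := by
        have h := Subgroup.relIndex_ker (K := P) φ
        rw [hφ, QuotientGroup.ker_mk'] at h
        rw [show (P : Subgroup G).map φ = Hb from ?_] at h
        · exact h
        · rw [hPdef, hφ]
          exact Subgroup.map_comap_eq_self_of_surjective hφs Hb
      have hcop : Nat.Coprime (Nat.card N') N'.index := by
        rw [hcardN', hindexN']
        exact (coprime_of_pinum hHb1 rad_pi).symm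
      obtain ⟨H', hH'⟩ := Subgroup.exists_right_complement'_of_coprime hcop
      set H := H'.map P.subtype with hHdef
      have hHP : H ≤ P := Subgroup.map_subtype_le H'
      have hcardH : Nat.card H = Nat.card H' :=
        (Nat.card_congr (Subgroup.equivMapOfInjective _ _ P.subtype_injective).toEquiv).symm
      have hcardH' : Nat.card H' = N'.index := by
        have h1 : Nat.card N' * Nat.card H' = Nat.card ↥P := hH'.card_mul
        have h2 : N'.index * Nat.card N' = Nat.card ↥P := Subgroup.index_mul_card N'
        have h3 := h1.trans h2.symm
        exact Nat.eq_of_mul_eq_mul_left Nat.card_pos (by rw [h3]; ring)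
      have hHpi : PiNum π (Nat.card H) := by
        rw [hcardH, hcardH', hindexN']; exact hHb1
      have hHindex : H.index = Nat.card Nn * Hb.index := by
        have h1 : H.relIndex P * P.index = H.index := Subgroup.relIndex_mul_index hHP
        have h2 : P.index = Hb.index := by
          rw [hPdef, hφ]
          exact Subgroup.index_comap_of_surjective Hb hφs
        have h3 : H.relIndex P = Nat.card Nn := by
          have e1 : (H.subgroupOf P).index * Nat.card ↥(H.subgroupOf P) = Nat.card ↥P :=
            Subgroup.index_mul_card _
          rw [card_subgroupOf_of_le hHP, hcardH, hcardH'] at e1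
          have e2 : N'.index * Nat.card N' = Nat.card ↥P := Subgroup.index_mul_card N'
          have e3 : (H.subgroupOf P).index * N'.index = N'.index * Nat.card N' := e1.trans e2.symm
          have : (H.subgroupOf P).index * N'.index = Nat.card N' * N'.index := by
            rw [e3]; ring
          have h4 := Nat.eq_of_mul_eq_mul_right
            (Nat.pos_of_ne_zero (Subgroup.index_ne_zero_of_finite (H := N'))) this
          rw [← hcardN']
          exact h4
        rw [← h1, h2, h3]
      refine ⟨H, hHpi, ?_, ?_⟩
      · intro ℓ hℓ hdvd
        rw [hHindex] at hdvd
        rcases hℓ.dvd_mul.mp hdvd with h | h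
        · exact rad_pi ℓ hℓ h
        · exact hHb2 ℓ hℓ h
      · intro a b ha hb'
        have haP : a ∈ P := hHP ha
        have hbP : b ∈ P := hHP hb'
        have hcab : φ a * φ b = φ b * φ a :=
          hHb3 (φ a) (φ b) (Subgroup.mem_comap.mp haP) (Subgroup.mem_comap.mp hbP)
        set z := a * b * (b * a)⁻¹ with hz
        have hzN : z ∈ Nn := by
          have : φ z = 1 := by
            rw [hz, map_mul, map_inv, map_mul, map_mul, hcab, mul_inv_cancel]
          exact (QuotientGroup.eq_one_iff z).mp this
        have hzH : z ∈ H := by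
          rw [hz]
          exact mul_mem (mul_mem ha hb') (inv_mem (mul_mem hb' ha))
        obtain ⟨y, hy, hyz⟩ := hzH
        have hyN' : y ∈ N' := by
          rw [hN'def, Subgroup.mem_subgroupOf]
          rw [← hyz] at hzN
          exact hzN
        have hy1 : y = 1 := by
          have hmem : y ∈ N' ⊓ H' := ⟨hyN', SetLike.mem_coe.mp hy⟩
          have := hH'.disjoint.le_bot hmem
          exact Subgroup.mem_bot.mp this
        have hz1 : z = 1 := by rw [← hyz, hy1]; rfl
        rw [hz] at hz1
        exact mul_inv_eq_one.mp hz1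

end PiSepAux

theorem abelian_hall_of_pi_class_sizes (G : Type*) [Group G] [Finite G] (π : Set ℕ)
    (hsep : IsPiSeparable G π)
    (hcl : ∀ x : G, (∀ ℓ : ℕ, ℓ.Prime → ℓ ∣ orderOf x → ℓ ∈ π) →
      ∀ ℓ ∈ π, ℓ.Prime → ¬ ℓ ∣ Nat.card {z : G | IsConj x z}) :
    ∃ H : Subgroup G,
      (∀ ℓ : ℕ, ℓ.Prime → ℓ ∣ Nat.card H → ℓ ∈ π) ∧
      (∀ ℓ : ℕ, ℓ.Prime → ℓ ∣ H.index → ℓ ∉ π) ∧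
      (∀ a b : G, a ∈ H → b ∈ H → a * b = b * a) := by
  obtain ⟨H, h1, h2, h3⟩ := PiSepAux.main_aux (Nat.card G) G π (le_refl _) hsep hcl
  exact ⟨H, h1, h2, h3⟩
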